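/- Let (X_n) contain isomorphs of an infinite-dimensional Banach space X uniformly and 1 ≤ p < ∞. Then the set (Σ_n X_n)_p⁺ \ (Σ_n X_n)_p together with 0 contains a closed subspace of the Fréchet space (Σ_n X_n)_p⁺ of dimension dim X. -/

import Mathlib

open Filter Topology

lemma aux_rpow_add_le {a b q : ℝ} (ha : 0 ≤ a) (hb : 0 ≤ b) (hq : 0 ≤ q) :
    (a + b) ^ q ≤ 2 ^ q * (a ^ q + b ^ q) := by
  have h1 : a + b ≤ 2 * max a b := by
    rcases le_total a b with h | h
    · rw [max_eq_right h]; linarith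
    · rw [max_eq_left h]; linarith
  have h2 : (max a b) ^ q ≤ a ^ q + b ^ q := by
    rcases le_total a b with h | h
    · rw [max_eq_right h]
      have : (0:ℝ) ≤ a ^ q := Real.rpow_nonneg ha q
      linarith
    · rw [max_eq_left h]
      have : (0:ℝ) ≤ b ^ q := Real.rpow_nonneg hb q
      linarith
  calc (a + b) ^ q ≤ (2 * max a b) ^ q :=
        Real.rpow_le_rpow (by positivity) h1 hq
    _ = 2 ^ q * (max a b) ^ q :=
        Real.mul_rpow (by norm_num) (le_max_of_le_left ha)
    _ ≤ 2 ^ q * (a ^ q + b ^ q) := by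
        have h2q : (0:ℝ) ≤ 2 ^ q := Real.rpow_nonneg (by norm_num) q
        nlinarith

lemma aux_summable_sub {ι : Type*} {u v : ι → ℝ} {q : ℝ} (hq : 0 ≤ q)
    (hu0 : ∀ i, 0 ≤ u i) (hv0 : ∀ i, 0 ≤ v i) {w : ι → ℝ}
    (hw : ∀ i, 0 ≤ w i) (hwle : ∀ i, w i ≤ u i + v i)
    (hu : Summable fun i => (u i) ^ q) (hv : Summable fun i => (v i) ^ q) :
    Summable fun i => (w i) ^ q := by
  apply Summable.of_nonneg_of_le (fun i => Real.rpow_nonneg (hw i) q)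
    (fun i => ?_) ((hu.add hv).mul_left ((2:ℝ) ^ q))
  calc (w i) ^ q ≤ (u i + v i) ^ q :=
        Real.rpow_le_rpow (hw i) (hwle i) hq
    _ ≤ 2 ^ q * ((u i) ^ q + (v i) ^ q) := aux_rpow_add_le (hu0 i) (hv0 i) hq

theorem stmt18.{u, v} (X : Type u) [NormedAddCommGroup X] [NormedSpace ℝ X]
    [CompleteSpace X] (hX : ¬ FiniteDimensional ℝ X)
    (Y : ℕ → Type v) [∀ n, NormedAddCommGroup (Y n)] [∀ n, NormedSpace ℝ (Y n)]
    [∀ n, CompleteSpace (Y n)]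
    (δ : ℝ) (hδ : 0 < δ) (R : ∀ n, X →L[ℝ] Y n)
    (hR : ∀ n, ‖R n‖ ≤ δ) (hRinv : ∀ n x, ‖x‖ ≤ δ * ‖R n x‖)
    (p : ℝ) (hp : 1 ≤ p) :
    ∃ S : Submodule ℝ (∀ n, Y n),
      (∀ f ∈ S, ∀ q > p, Summable fun n => ‖f n‖ ^ q) ∧
      Cardinal.lift.{u} (Module.rank ℝ S) = Cardinal.lift.{v} (Module.rank ℝ X) ∧
      (∀ f ∈ S, f ≠ 0 → ¬ Summable fun n => ‖f n‖ ^ p) ∧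
      (∀ z : ∀ n, Y n, (∀ q > p, Summable fun n => ‖z n‖ ^ q) →
        (∃ F : ℕ → ∀ n, Y n, (∀ j, F j ∈ S) ∧
          ∀ q > p, Tendsto (fun j => ∑' n, ‖F j n - z n‖ ^ q) atTop (𝓝 0)) →
        z ∈ S) := by
  have hp0 : 0 < p := lt_of_lt_of_le one_pos hp
  -- weights
  set a : ℕ → ℝ := fun n => ((n : ℝ) + 1) ^ (-(1/p)) with ha_def
  have ha_pos : ∀ n, 0 < a n := fun n => Real.rpow_pos_of_pos (by positivity) _
  have ha_rpow : ∀ (n : ℕ) (q : ℝ), (a n) ^ q = ((n:ℝ)+1) ^ (-(q/p)) := by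
    intro n q
    show (((n:ℝ)+1) ^ (-(1/p))) ^ q = _
    rw [← Real.rpow_mul (by positivity)]
    congr 1
    ring
  -- the map T
  set T : X →ₗ[ℝ] ∀ n, Y n :=
    { toFun := fun x n => a n • R n x
      map_add' := by intro x y; funext n; simp [smul_add]
      map_smul' := by
        intro c x
        funext n
        simp only [RingHom.id_apply, Pi.smul_apply, map_smul]
        rw [smul_comm] } with hT_def
  have hT_apply : ∀ (x : X) (n : ℕ), T x n = a n • R n x := fun _ _ => rfl
  have hT_norm : ∀ (x : X) (n : ℕ), ‖T x n‖ = a n * ‖R n x‖ := by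
    intro x n
    rw [hT_apply, norm_smul, Real.norm_of_nonneg (ha_pos n).le]
  -- upper bound
  have hub : ∀ (x : X) (n : ℕ), ‖T x n‖ ≤ a n * (δ * ‖x‖) := by
    intro x n
    rw [hT_norm]
    exact mul_le_mul_of_nonneg_left
      (((R n).le_opNorm x).trans (mul_le_mul_of_nonneg_right (hR n) (norm_nonneg x)))
      (ha_pos n).le
  -- lower bound
  have hlb : ∀ (x : X) (n : ℕ), a n * (‖x‖ / δ) ≤ ‖T x n‖ := by
    intro x n
    rw [hT_norm]
    apply mul_le_mul_of_nonneg_left _ (ha_pos n).le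
    rw [div_le_iff₀ hδ, mul_comm]
    exact hRinv n x
  -- summability for q > p of anything dominated by range elements
  have hsum : ∀ (x : X) (q : ℝ), p < q → Summable fun n => ‖T x n‖ ^ q := by
    intro x q hq
    have hq0 : 0 < q := hp0.trans hq
    have hbase : Summable fun n : ℕ => ((n:ℝ)+1) ^ (-(q/p)) := by
      have h1 : Summable fun n : ℕ => (n:ℝ) ^ (-(q/p)) := by
        rw [Real.summable_nat_rpow]
        have h1q : 1 < q / p := (one_lt_div hp0).mpr hq
        linarith
      have := (summable_nat_add_iff 1).mpr h1
      refine this.congr fun n => ?_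
      push_cast
      ring_nf
    have hbase' : Summable fun n : ℕ => (a n) ^ q * (δ * ‖x‖) ^ q := by
      apply Summable.mul_right
      exact hbase.congr fun n => (ha_rpow n q).symm
    apply Summable.of_nonneg_of_le (fun n => Real.rpow_nonneg (norm_nonneg _) q)
      (fun n => ?_) hbase'
    rw [← Real.mul_rpow (ha_pos n).le (by positivity)]
    exact Real.rpow_le_rpow (norm_nonneg _) (hub x n) hq0.le
  -- non-summability at p for x ≠ 0
  have hnsum : ∀ x : X, x ≠ 0 → ¬ Summable fun n => ‖T x n‖ ^ p := by
    intro x hx hsummable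
    have hxn : 0 < ‖x‖ / δ := div_pos (norm_pos_iff.mpr hx) hδ
    have h1 : Summable fun n : ℕ => (a n) ^ p * (‖x‖/δ) ^ p := by
      apply Summable.of_nonneg_of_le (fun n => by positivity) (fun n => ?_) hsummable
      rw [← Real.mul_rpow (ha_pos n).le hxn.le]
      exact Real.rpow_le_rpow (by positivity) (hlb x n) hp0.le
    have h2 : Summable fun n : ℕ => ((n:ℝ)+1)⁻¹ := by
      have := h1.mul_right ((‖x‖/δ) ^ p)⁻¹
      refine this.congr fun n => ?_
      rw [mul_assoc, mul_inv_cancel₀ (by positivity), mul_one, ha_rpow n p]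
      rw [div_self hp0.ne', Real.rpow_neg_one]
    have h3 : Summable fun n : ℕ => ((n:ℕ):ℝ)⁻¹ := by
      rw [← summable_nat_add_iff 1]
      exact h2.congr fun n => by push_cast; ring_nf
    exact Real.not_summable_natCast_inv h3
  -- injectivity of T
  have hTinj : Function.Injective T := by
    intro x y hxy
    have hcomp0 : a 0 • R 0 x = a 0 • R 0 y := by
      have : T x 0 = T y 0 := by rw [hxy]
      rwa [hT_apply, hT_apply] at this
    have hR0 : R 0 x = R 0 y := smul_right_injective _ (ha_pos 0).ne' hcomp0
    have h5 : ‖x - y‖ ≤ δ * ‖R 0 x - R 0 y‖ := by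
      have := hRinv 0 (x - y)
      rwa [map_sub] at this
    rw [hR0, sub_self, norm_zero, mul_zero] at h5
    exact sub_eq_zero.mp (norm_le_zero_iff.mp h5)
  refine ⟨LinearMap.range T, ?_, ?_, ?_, ?_⟩
  · rintro f ⟨x, rfl⟩ q hq
    exact hsum x q hq
  · rw [← LinearEquiv.lift_rank_eq (LinearEquiv.ofInjective T hTinj)]
  · rintro f ⟨x, rfl⟩ hf
    apply hnsum x _
    rintro rfl
    simp at hf
  · rintro z hz ⟨F, hFS, hFconv⟩
    -- fix q = p + 1
    set q : ℝ := p + 1 with hq_def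
    have hqp : p < q := by rw [hq_def]; linarith
    have hq0 : (0:ℝ) < q := by rw [hq_def]; linarith
    choose x hx using fun j => hFS j
    -- componentwise convergence
    have hcomp : ∀ n, Tendsto (fun j => F j n) atTop (𝓝 (z n)) := by
      intro n
      rw [tendsto_iff_norm_sub_tendsto_zero]
      have hle : ∀ j, ‖F j n - z n‖ ^ q ≤ ∑' m, ‖F j m - z m‖ ^ q := by
        intro j
        apply Summable.le_tsum _ n (fun m _ => Real.rpow_nonneg (norm_nonneg _) q)
        exact aux_summable_sub hq0.le (fun m => norm_nonneg _) (fun m => norm_nonneg _)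
          (fun m => norm_nonneg _) (fun m => norm_sub_le _ _)
          (by rw [← hx j]; exact hsum (x j) q hqp) (hz q hqp)
      have hq_tend : Tendsto (fun j => ‖F j n - z n‖ ^ q) atTop (𝓝 0) := by
        apply squeeze_zero (fun j => Real.rpow_nonneg (norm_nonneg _) q) hle
        exact hFconv q hqp
      have hT2 : Tendsto (fun j => (‖F j n - z n‖ ^ q) ^ q⁻¹) atTop (𝓝 ((0:ℝ) ^ q⁻¹)) :=
        hq_tend.rpow_const (Or.inr (by positivity))
      rw [Real.zero_rpow (by positivity)] at hT2
      refine hT2.congr fun j => ?_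
      rw [← Real.rpow_mul (norm_nonneg _), mul_inv_cancel₀ hq0.ne', Real.rpow_one]
    -- x j is Cauchy
    have hcauchy : CauchySeq x := by
      rw [Metric.cauchySeq_iff]
      intro ε hε
      have hR0 : CauchySeq (fun j => F j 0) := (hcomp 0).cauchySeq
      rw [Metric.cauchySeq_iff] at hR0
      obtain ⟨N, hN⟩ := hR0 (a 0 * ε / δ) (by positivity)
      refine ⟨N, fun j hj k hk => ?_⟩
      have h1 : dist (x j) (x k) = ‖x j - x k‖ := dist_eq_norm _ _
      have h2 : ‖x j - x k‖ ≤ δ * ‖R 0 (x j - x k)‖ := hRinv 0 _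
      have h3 : a 0 * ‖R 0 (x j - x k)‖ = ‖F j 0 - F k 0‖ := by
        rw [← hx j, ← hx k, hT_apply, hT_apply, ← smul_sub, norm_smul,
          Real.norm_of_nonneg (ha_pos 0).le, map_sub]
      have h4 := hN j hj k hk
      rw [dist_eq_norm] at h4
      rw [h1]
      calc ‖x j - x k‖ ≤ δ * ‖R 0 (x j - x k)‖ := h2
        _ = δ / a 0 * (a 0 * ‖R 0 (x j - x k)‖) := by
            field_simp
            simp [(ha_pos 0).ne']
        _ = δ / a 0 * ‖F j 0 - F k 0‖ := by rw [h3]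
        _ < δ / a 0 * (a 0 * ε / δ) := by
            apply mul_lt_mul_of_pos_left h4 (by positivity)
        _ = ε := by field_simp; simp [(ha_pos 0).ne']
    obtain ⟨x₀, hx₀⟩ := cauchySeq_tendsto_of_complete hcauchy
    refine ⟨x₀, ?_⟩
    funext n
    have h1 : Tendsto (fun j => T (x j) n) atTop (𝓝 (T x₀ n)) := by
      simp only [hT_apply]
      exact ((R n).continuous.tendsto x₀).comp hx₀ |>.const_smul (a n)
    have h2 : Tendsto (fun j => T (x j) n) atTop (𝓝 (z n)) := by
      refine (hcomp n).congr fun j => ?_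
      rw [hx j]
    exact tendsto_nhds_unique h1 h2
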